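/- Let $y_1, \dots, y_N \in [-1/2, 1/2)$ be pairwise distinct nodes, $x_1, \dots, x_N \in [-1/2, 1/2)$ nodes with $\{x_l\} \cap \{y_j\} = \emptyset$, and let $f$ be a trigonometric polynomial $f(x) = \sum_{k=-N/2}^{N/2-1} \hat{f}_k e^{2\pi i k x}$. Define $f_j = f(y_j)$, $g_l = f(x_l)$, $a_l = \prod_{n=1}^{N} \sin(\pi(x_l - y_n))$, and $b_j = \prod_{n \ne j} \sin(\pi(y_j - y_n))^{-1}$. Then for all $l = 1, \dots, N$: $g_l = a_l \sum_{j=1}^N f_j b_j \left( \cot(\pi(x_l - y_j)) - i \right)$. -/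

import Mathlib

open Complex Finset

lemma sin_key (p q : ℝ) :
    (Real.sin (Real.pi*(p-q)) : ℂ) * (2*Complex.I*Complex.exp (Real.pi*Complex.I*p)*Complex.exp (Real.pi*Complex.I*q))
      = Complex.exp (2*Real.pi*Complex.I*p) - Complex.exp (2*Real.pi*Complex.I*q) := by
  have h1 : Complex.exp ((Real.pi*(p-q) : ℝ) * Complex.I) * (Complex.exp (Real.pi*Complex.I*p) * Complex.exp (Real.pi*Complex.I*q)) = Complex.exp (2*Real.pi*Complex.I*p) := by
    rw [← Complex.exp_add, ← Complex.exp_add]; congr 1; push_cast; ring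
  have h2 : Complex.exp (-((Real.pi*(p-q) : ℝ) : ℂ) * Complex.I) * (Complex.exp (Real.pi*Complex.I*p) * Complex.exp (Real.pi*Complex.I*q)) = Complex.exp (2*Real.pi*Complex.I*q) := by
    rw [← Complex.exp_add, ← Complex.exp_add]; congr 1; push_cast; ring
  rw [Complex.ofReal_sin, Complex.sin]
  linear_combination h1 - h2 +
    (Complex.exp (-((Real.pi*(p-q) : ℝ) : ℂ) * Complex.I) - Complex.exp ((Real.pi*(p-q) : ℝ) * Complex.I)) *
      (Complex.exp (Real.pi*Complex.I*p) * Complex.exp (Real.pi*Complex.I*q)) * Complex.I_sq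

lemma cot_sub_I (θ : ℝ) (h : Real.sin θ ≠ 0) :
    (((Real.tan θ)⁻¹ : ℝ) : ℂ) - Complex.I = Complex.exp (-(θ:ℂ)*Complex.I) / (Real.sin θ : ℂ) := by
  have he : Complex.exp (-(θ:ℂ)*Complex.I) = (Real.cos θ : ℂ) - (Real.sin θ : ℂ) * Complex.I := by
    rw [show -(θ:ℂ)*Complex.I = ((-θ : ℝ) : ℂ)*Complex.I by push_cast; ring, Complex.exp_mul_I]
    push_cast
    rw [Complex.cos_neg, Complex.sin_neg]; ring
  have hs : (Real.sin θ : ℂ) ≠ 0 := Complex.ofReal_ne_zero.mpr h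
  rw [he, Real.tan_eq_sin_div_cos, inv_div, eq_div_iff hs]
  push_cast
  have hs2 : Complex.sin (θ:ℂ) ≠ 0 := by rwa [← Complex.ofReal_sin]
  rw [sub_mul, div_mul_cancel₀ _ hs2]
  rw [← Complex.ofReal_sin, ← Complex.ofReal_cos]
  ring

lemma scalar_key (N' : ℕ) (s S1 S2 P Qv wy wx : ℂ) (hs : s ≠ 0) (hwy : wy ≠ 0) (hwx : wx ≠ 0)
    (hP : S1 * S2 = P * (wy * wx⁻¹)^N') :
    (s * S1) * (Qv * (wy^(N'+1))⁻¹ * S2 * (wy * wx⁻¹ / s)) = Qv * P * ((wx^(N'+1))⁻¹) := by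
  rw [mul_pow, inv_pow] at hP
  field_simp at hP
  field_simp
  linear_combination Qv * wx * wy * hP

lemma factor_key (s1 s2 i wx wn wy : ℂ) (hi : i ≠ 0) (hwx : wx ≠ 0) (hwn : wn ≠ 0) (hwy : wy ≠ 0) :
    s1 * s2⁻¹ = (s2 * (2*i*wy*wn))⁻¹ * (s1 * (2*i*wx*wn)) * (wy * wx⁻¹) := by
  have h : (s2 * (2*i*wy*wn))⁻¹ * (s1 * (2*i*wx*wn)) * (wy * wx⁻¹)
      = (s1 * s2⁻¹) * ((i*i⁻¹)*(wx*wx⁻¹)*(wn*wn⁻¹)*(wy*wy⁻¹)*((2:ℂ)*2⁻¹)) := by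
    ring
  rw [h, mul_inv_cancel₀ hi, mul_inv_cancel₀ hwx, mul_inv_cancel₀ hwn, mul_inv_cancel₀ hwy,
    mul_inv_cancel₀ (two_ne_zero (α := ℂ))]
  simp

/-- Lagrange interpolation formula relating two evaluations of a
trigonometric polynomial:
`g_l = a_l ∑_j f_j b_j (cot(π(x_l - y_j)) - i)`. -/
theorem stmt2 (N : ℕ) (hNpos : 0 < N) (hNeven : Even N)
    (y x : Fin N → ℝ)
    (hy : ∀ j, y j ∈ Set.Ico (-(1/2 : ℝ)) (1/2))
    (hx : ∀ l, x l ∈ Set.Ico (-(1/2 : ℝ)) (1/2))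
    (hyy : ∀ j n, j ≠ n → Real.sin (Real.pi * (y j - y n)) ≠ 0)
    (hxy : ∀ l n, Real.sin (Real.pi * (x l - y n)) ≠ 0)
    (fhat : Fin N → ℂ)
    (f : ℝ → ℂ)
    (hf : ∀ t : ℝ, f t = ∑ k : Fin N,
      fhat k * Complex.exp (2 * Real.pi * Complex.I * (((k : ℝ) - (N : ℝ) / 2) * t)))
    (fj g : Fin N → ℂ) (hfj : ∀ j, fj j = f (y j)) (hg : ∀ l, g l = f (x l))
    (a b : Fin N → ℝ)
    (ha : ∀ l, a l = ∏ n : Fin N, Real.sin (Real.pi * (x l - y n)))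
    (hb : ∀ j, b j = ∏ n ∈ Finset.univ.erase j, (Real.sin (Real.pi * (y j - y n)))⁻¹) :
    ∀ l, g l = (a l : ℂ) * ∑ j : Fin N, fj j * (b j : ℂ) *
      (((Real.tan (Real.pi * (x l - y j)))⁻¹ : ℝ) - Complex.I) := by
  classical
  obtain ⟨N', rfl⟩ : ∃ N', N = N' + 1 := ⟨N - 1, (Nat.succ_pred_eq_of_pos hNpos).symm⟩
  intro l
  set w : ℝ → ℂ := fun t => Complex.exp (Real.pi*Complex.I*t) with hwdef
  set E : ℝ → ℂ := fun t => Complex.exp (2*Real.pi*Complex.I*t) with hEdef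
  have hwne : ∀ t, w t ≠ 0 := fun t => Complex.exp_ne_zero _
  have hsk : ∀ p q : ℝ, (Real.sin (Real.pi*(p-q)) : ℂ) * (2*Complex.I*w p*w q) = E p - E q :=
    fun p q => sin_key p q
  have hfac : ∀ p q : ℝ, (2*Complex.I*w p*w q) ≠ 0 := fun p q =>
    mul_ne_zero (mul_ne_zero (mul_ne_zero two_ne_zero Complex.I_ne_zero) (hwne p)) (hwne q)
  -- injectivity of nodes
  have hvinj : Set.InjOn (fun n : Fin (N'+1) => E (y n)) ↑(univ : Finset (Fin (N'+1))) := by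
    intro j _ n _ heq
    by_contra hne
    apply hyy j n hne
    have h0 : (Real.sin (Real.pi*(y j - y n)) : ℂ) * (2*Complex.I*w (y j)*w (y n)) = 0 := by
      rw [hsk]; simp only at heq; rw [heq]; ring
    rcases mul_eq_zero.mp h0 with h | h
    · exact_mod_cast h
    · exact absurd h (hfac _ _)
  -- E t = w t * w t
  have hEw : ∀ t, E t = w t * w t := by
    intro t
    rw [hEdef, hwdef]; simp only
    rw [← Complex.exp_add]; congr 1; ring
  -- the polynomial
  set Q : Polynomial ℂ := ∑ k : Fin (N'+1), Polynomial.C (fhat k) * Polynomial.X ^ (k:ℕ) with hQdef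
  have hQE : ∀ t : ℝ, Q.eval (E t) = f t * (w t)^(N'+1) := by
    intro t
    rw [hf, hQdef, Polynomial.eval_finset_sum, Finset.sum_mul]
    refine Finset.sum_congr rfl fun k _ => ?_
    rw [Polynomial.eval_mul, Polynomial.eval_C, Polynomial.eval_pow, Polynomial.eval_X, mul_assoc]
    congr 1
    rw [hEdef, hwdef]; simp only
    rw [← Complex.exp_nat_mul, ← Complex.exp_nat_mul, ← Complex.exp_add]
    congr 1
    push_cast
    ring
  have hdeg : Q.degree < (#(univ : Finset (Fin (N'+1))) : WithBot ℕ) := by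
    rw [card_univ, Fintype.card_fin]
    refine lt_of_le_of_lt (Polynomial.degree_sum_le _ _) ?_
    rw [Finset.sup_lt_iff (by exact_mod_cast WithBot.bot_lt_coe (N'+1))]
    intro k _
    refine lt_of_le_of_lt (Polynomial.degree_C_mul_X_pow_le _ _) ?_
    exact_mod_cast k.2
  have hL := Lagrange.eq_interpolate (v := fun n : Fin (N'+1) => E (y n)) (s := univ) hvinj hdeg
  have hQu : Q.eval (E (x l)) = ∑ j : Fin (N'+1), Q.eval (E (y j)) *
      ∏ n ∈ univ.erase j, ((E (y j) - E (y n))⁻¹ * (E (x l) - E (y n))) := by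
    conv_lhs => rw [hL]
    rw [Lagrange.interpolate_apply, Polynomial.eval_finset_sum]
    refine sum_congr rfl fun j _ => ?_
    rw [Polynomial.eval_mul, Polynomial.eval_C, Lagrange.basis, Polynomial.eval_prod]
    congr 1
    refine prod_congr rfl fun n _ => ?_
    simp [Lagrange.basisDivisor]
  -- the per-term identity
  have hterm : ∀ j : Fin (N'+1),
      ((a l : ℝ) : ℂ) * (fj j * ((b j : ℝ) : ℂ) *
        ((((Real.tan (Real.pi * (x l - y j)))⁻¹ : ℝ) : ℂ) - Complex.I))
      = Q.eval (E (y j)) *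
          (∏ n ∈ univ.erase j, ((E (y j) - E (y n))⁻¹ * (E (x l) - E (y n)))) *
          ((w (x l))^(N'+1))⁻¹ := by
    intro j
    have hθ : Real.sin (Real.pi * (x l - y j)) ≠ 0 := hxy l j
    have hθC : (Real.sin (Real.pi * (x l - y j)) : ℂ) ≠ 0 := Complex.ofReal_ne_zero.mpr hθ
    have hcot := cot_sub_I (Real.pi * (x l - y j)) hθ
    have hexp : Complex.exp (-((Real.pi * (x l - y j) : ℝ) : ℂ) * Complex.I)
        = w (y j) * (w (x l))⁻¹ := by
      rw [hwdef]; simp only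
      rw [← Complex.exp_neg, ← Complex.exp_add]
      congr 1; push_cast; ring
    have hfjv : fj j = Q.eval (E (y j)) * ((w (y j))^(N'+1))⁻¹ := by
      rw [hfj, hQE, mul_inv_cancel_right₀ (pow_ne_zero _ (hwne (y j)))]
    have hcard : #(univ.erase j) = N' := by
      rw [card_erase_of_mem (mem_univ j), card_univ, Fintype.card_fin]
      rfl
    have hprod : (∏ n ∈ univ.erase j, (Real.sin (Real.pi * (x l - y n)) : ℂ)) *
        (∏ n ∈ univ.erase j, ((Real.sin (Real.pi * (y j - y n)) : ℂ))⁻¹)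
        = (∏ n ∈ univ.erase j, ((E (y j) - E (y n))⁻¹ * (E (x l) - E (y n)))) *
            (w (y j) * (w (x l))⁻¹)^N' := by
      have hc2 : (w (y j) * (w (x l))⁻¹)^N' = ∏ _n ∈ univ.erase j, (w (y j) * (w (x l))⁻¹) := by
        rw [Finset.prod_const, hcard]
      rw [hc2, ← Finset.prod_mul_distrib, ← Finset.prod_mul_distrib]
      refine prod_congr rfl fun n hn => ?_
      have hnj : j ≠ n := (Finset.ne_of_mem_erase hn).symm
      have hs2 : (Real.sin (Real.pi * (y j - y n)) : ℂ) ≠ 0 :=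
        Complex.ofReal_ne_zero.mpr (hyy j n hnj)
      rw [← hsk (x l) (y n), ← hsk (y j) (y n)]
      exact factor_key _ _ Complex.I _ _ _ Complex.I_ne_zero (hwne (x l)) (hwne (y n)) (hwne (y j))
    have haC : ((a l : ℝ) : ℂ) = (Real.sin (Real.pi * (x l - y j)) : ℂ) *
        ∏ n ∈ univ.erase j, (Real.sin (Real.pi * (x l - y n)) : ℂ) := by
      rw [ha]; push_cast
      exact (Finset.mul_prod_erase univ _ (mem_univ j)).symm
    have hbC : ((b j : ℝ) : ℂ) = ∏ n ∈ univ.erase j,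
        ((Real.sin (Real.pi * (y j - y n)) : ℂ))⁻¹ := by
      rw [hb]; push_cast; rfl
    rw [hcot, hexp, hfjv, haC, hbC]
    exact scalar_key N' _ _ _ _ _ _ _ hθC (hwne (y j)) (hwne (x l)) hprod
  -- assemble
  have hwxN : ((w (x l))^(N'+1)) ≠ 0 := pow_ne_zero _ (hwne _)
  have hfx : f (x l) = Q.eval (E (x l)) * ((w (x l))^(N'+1))⁻¹ := by
    rw [hQE, mul_inv_cancel_right₀ hwxN]
  rw [hg, hfx, hQu, Finset.sum_mul, Finset.mul_sum]
  exact sum_congr rfl fun j _ => (hterm j).symm
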